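/- arXiv:2409.18820 — 2 statements merged into one kernel-verified Lean document; each statement's English description precedes it below -/
import Mathlib

section
/- Let G be a simple graph containing an induced odd cycle C, and let v ∈ V(G) ∖ V(C) be a vertex having at least two neighbors on C. Then there is a subpath P of C whose two endpoints are neighbors of v, none of whose internal vertices is a neighbor of v, and whose number of vertices is even; consequently the vertex set V(P) ∪ {v} induces an odd cycle in G. -/
open SimpleGraph Walk

private lemma arc_lemma {V : Type*} {G : SimpleGraph V} {v : V} :
    ∀ (n : ℕ) {a b : V} (q : G.Walk a b), q.length ≤ n → q.IsPath →
    G.Adj v a → G.Adj v b → Odd q.length →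
    ∃ (x y : V) (p : G.Walk x y), p.IsPath ∧ (∀ e ∈ p.edges, e ∈ q.edges) ∧
      (∀ z ∈ p.support, z ∈ q.support) ∧
      G.Adj v x ∧ G.Adj v y ∧ (∀ z ∈ p.support, z ≠ x → z ≠ y → ¬ G.Adj v z) ∧
      Odd p.length := by
  classical
  intro n
  induction n with
  | zero =>
    intro a b q hle hp ha hb hodd
    interval_cases h : q.length
    · simp at hodd
  | succ n ih =>
    intro a b q hle hp ha hb hodd
    by_cases hz : ∃ z ∈ q.support, z ≠ a ∧ z ≠ b ∧ G.Adj v z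
    · obtain ⟨z, hzs, hza, hzb, hvz⟩ := hz
      have hspec := q.take_spec hzs
      have hlen : (q.takeUntil z hzs).length + (q.dropUntil z hzs).length = q.length := by
        conv_rhs => rw [← hspec]
        rw [Walk.length_append]
      have h1 : 1 ≤ (q.takeUntil z hzs).length := by
        rcases Nat.eq_zero_or_pos (q.takeUntil z hzs).length with h | h
        · exact absurd (Walk.eq_of_length_eq_zero h).symm hza
        · exact h
      have h2 : 1 ≤ (q.dropUntil z hzs).length := by
        rcases Nat.eq_zero_or_pos (q.dropUntil z hzs).length with h | h
        · exact absurd (Walk.eq_of_length_eq_zero h) hzb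
        · exact h
      have hq2 : q.length % 2 = 1 := Nat.odd_iff.mp hodd
      have hor : Odd (q.takeUntil z hzs).length ∨ Odd (q.dropUntil z hzs).length := by
        rw [Nat.odd_iff, Nat.odd_iff]
        omega
      rcases hor with h | h
      · obtain ⟨x, y, p, hpp, hpe, hps, hvx, hvy, hint, hpodd⟩ :=
          ih (q.takeUntil z hzs) (by omega) (hp.takeUntil hzs) ha hvz h
        exact ⟨x, y, p, hpp, fun e he => q.edges_takeUntil_subset hzs (hpe e he),
          fun w hw => q.support_takeUntil_subset hzs (hps w hw), hvx, hvy, hint, hpodd⟩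
      · obtain ⟨x, y, p, hpp, hpe, hps, hvx, hvy, hint, hpodd⟩ :=
          ih (q.dropUntil z hzs) (by omega) (hp.dropUntil hzs) hvz hb h
        exact ⟨x, y, p, hpp, fun e he => q.edges_dropUntil_subset hzs (hpe e he),
          fun w hw => q.support_dropUntil_subset hzs (hps w hw), hvx, hvy, hint, hpodd⟩
    · push_neg at hz
      exact ⟨a, b, q, hp, fun e he => he, fun w hw => hw, ha, hb, hz, hodd⟩

/-- If `G` has an induced odd cycle `C` and a vertex `v` outside `C`
with at least two neighbors on `C`, then some subpath `P` of `C` has both endpoints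
adjacent to `v`, no internal vertex adjacent to `v`, and an even number of vertices;
consequently `V(P) ∪ {v}` carries an odd cycle of `G`. -/
theorem odd_cheese
    {V : Type*} (G : SimpleGraph V) (u : V) (c : G.Walk u u)
    (hc : c.IsCycle) (hodd : Odd c.length)
    (hind : ∀ x ∈ c.support, ∀ y ∈ c.support, G.Adj x y → s(x, y) ∈ c.edges)
    (v : V) (hv : v ∉ c.support)
    (htwo : ∃ x ∈ c.support, ∃ y ∈ c.support, x ≠ y ∧ G.Adj v x ∧ G.Adj v y) :
    ∃ (x y : V) (p : G.Walk x y), p.IsPath ∧ (∀ e ∈ p.edges, e ∈ c.edges) ∧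
      G.Adj v x ∧ G.Adj v y ∧
      (∀ z ∈ p.support, z ≠ x → z ≠ y → ¬ G.Adj v z) ∧
      Even p.support.length ∧
      ∃ c' : G.Walk v v, c'.IsCycle ∧ Odd c'.length ∧
        (∀ z, z ∈ c'.support ↔ z = v ∨ z ∈ p.support) := by
  classical
  obtain ⟨x, hxs, y, hys, hxy, hvx, hvy⟩ := htwo
  -- rotate the cycle to start at x
  set c₁ := c.rotate x hxs with hc₁def
  have hc₁ : c₁.IsCycle := hc.rotate hxs
  have hlen₁ : c₁.length = c.length := by
    have h := (c.rotate_darts x hxs).perm.length_eq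
    rwa [Walk.length_darts, Walk.length_darts] at h
  have hedge₁ : ∀ e, e ∈ c₁.edges ↔ e ∈ c.edges := fun e => (c.rotate_edges x hxs).perm.mem_iff
  have tail_mem : ∀ {w : V} (d : G.Walk w w), ¬ d.Nil → ∀ z, z ∈ d.support ↔ z ∈ d.support.tail := by
    intro w d hd z
    obtain ⟨t, h, q, rfl⟩ := Walk.not_nil_iff.mp hd
    simp only [Walk.support_cons, List.tail_cons, List.mem_cons]
    constructor
    · rintro (rfl | h)
      · exact q.end_mem_support
      · exact h
    · exact Or.inr
  have hsup₁ : ∀ z, z ∈ c₁.support ↔ z ∈ c.support := by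
    intro z
    rw [tail_mem c₁ hc₁.not_nil, tail_mem c hc.not_nil,
      (c.support_rotate x hxs).perm.mem_iff]
  -- decompose c₁ = cons hadj w
  obtain ⟨x₂, hadj, w, hw_eq⟩ := Walk.not_nil_iff.mp hc₁.not_nil
  have hcons := (Walk.cons_isCycle_iff w hadj).mp (hw_eq ▸ hc₁)
  have hwpath : w.IsPath := hcons.1
  have hyw : y ∈ w.support := by
    have := (hsup₁ y).mpr hys
    rw [hw_eq, Walk.support_cons, List.mem_cons] at this
    rcases this with rfl | h
    · exact absurd rfl hxy
    · exact h
  -- split w at y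
  have hspec := w.take_spec hyw
  have hwlen : (w.takeUntil y hyw).length + (w.dropUntil y hyw).length = w.length := by
    conv_rhs => rw [← hspec]
    rw [Walk.length_append]
  have hw2ne : ¬ (w.dropUntil y hyw).Nil := Walk.not_nil_of_ne (fun h => hxy h.symm)
  -- x is not in the support of takeUntil
  have hxw1 : x ∉ (w.takeUntil y hyw).support := by
    obtain ⟨t, h, q, hq⟩ := Walk.not_nil_iff.mp hw2ne
    have hxtail : x ∈ (w.dropUntil y hyw).support.tail := by
      rw [hq, Walk.support_cons, List.tail_cons]
      exact q.end_mem_support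
    have hnd : w.support.Nodup := hwpath.support_nodup
    rw [← hspec, Walk.support_append, List.nodup_append] at hnd
    exact fun hx => hnd.2.2 x hx x hxtail rfl
  -- the two candidate arcs
  have hc₁len : c₁.length = w.length + 1 := by rw [hw_eq, Walk.length_cons]
  have hclodd : c.length % 2 = 1 := Nat.odd_iff.mp hodd
  -- choose the odd-length arc and apply arc_lemma
  have key : ∃ (a b : V) (q : G.Walk a b), q.IsPath ∧ (∀ e ∈ q.edges, e ∈ c.edges) ∧
      (∀ z ∈ q.support, z ∈ c.support) ∧ G.Adj v a ∧ G.Adj v b ∧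
      (∀ z ∈ q.support, z ≠ a → z ≠ b → ¬ G.Adj v z) ∧ Odd q.length := by
    have hw1sub : ∀ e ∈ (w.takeUntil y hyw).edges, e ∈ c.edges := by
      intro e he
      refine (hedge₁ e).mp ?_
      rw [hw_eq, Walk.edges_cons]
      exact List.mem_cons_of_mem _ (w.edges_takeUntil_subset hyw he)
    have hw2sub : ∀ e ∈ (w.dropUntil y hyw).edges, e ∈ c.edges := by
      intro e he
      refine (hedge₁ e).mp ?_
      rw [hw_eq, Walk.edges_cons]
      exact List.mem_cons_of_mem _ (w.edges_dropUntil_subset hyw he)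
    have hwsup : ∀ z ∈ w.support, z ∈ c.support := by
      intro z hz
      refine (hsup₁ z).mp ?_
      rw [hw_eq, Walk.support_cons]
      exact List.mem_cons_of_mem _ hz
    rcases Nat.even_or_odd (w.dropUntil y hyw).length with hpar | hpar
    · -- then cons hadj (takeUntil) has odd length
      have hP2odd : Odd (Walk.cons hadj (w.takeUntil y hyw)).length := by
        rw [Walk.length_cons, Nat.odd_iff]
        have := Nat.even_iff.mp hpar
        omega
      have hP2path : (Walk.cons hadj (w.takeUntil y hyw)).IsPath :=
        (Walk.cons_isPath_iff _ _).mpr ⟨hwpath.takeUntil hyw, hxw1⟩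
      obtain ⟨a, b, p, hpp, hpe, hps, hva, hvb, hint, hpodd⟩ :=
        arc_lemma (Walk.cons hadj (w.takeUntil y hyw)).length
          (Walk.cons hadj (w.takeUntil y hyw)) le_rfl hP2path hvx hvy hP2odd
      refine ⟨a, b, p, hpp, ?_, ?_, hva, hvb, hint, hpodd⟩
      · intro e he
        have h' := hpe e he
        rw [Walk.edges_cons, List.mem_cons] at h'
        rcases h' with rfl | h'
        · refine (hedge₁ _).mp ?_
          rw [hw_eq, Walk.edges_cons]
          exact List.mem_cons_self
        · exact hw1sub e h'
      · intro z hz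
        have h' := hps z hz
        rw [Walk.support_cons, List.mem_cons] at h'
        rcases h' with rfl | h'
        · exact hxs
        · exact hwsup z (w.support_takeUntil_subset hyw h')
    · -- the dropUntil arc has odd length
      obtain ⟨a, b, p, hpp, hpe, hps, hva, hvb, hint, hpodd⟩ :=
        arc_lemma (w.dropUntil y hyw).length (w.dropUntil y hyw) le_rfl
          (hwpath.dropUntil hyw) hvy hvx hpar
      exact ⟨a, b, p, hpp, fun e he => hw2sub e (hpe e he),
        fun z hz => hwsup z (w.support_dropUntil_subset hyw (hps z hz)), hva, hvb, hint, hpodd⟩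
  obtain ⟨a, b, p, hpp, hpe, hps, hva, hvb, hint, hpodd⟩ := key
  have hvp : v ∉ p.support := fun h => hv (hps v h)
  have hbp : b ∈ p.support := p.end_mem_support
  have hvb' : v ≠ b := fun h => hv (by rw [h]; exact hps b hbp)
  have hab : a ≠ b := by
    rintro rfl
    have hlp : 0 < p.length := by
      have := Nat.odd_iff.mp hpodd; omega
    obtain ⟨t, ht, q, rfl⟩ := Walk.not_nil_iff.mp (Walk.not_nil_iff_lt_length.mpr hlp)
    have hnd := hpp.support_nodup
    rw [Walk.support_cons, List.nodup_cons] at hnd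
    exact hnd.1 q.end_mem_support
  have hvanp : s(v, a) ∉ p.edges := fun h => hvp (p.fst_mem_support_of_mem_edges h)
  -- build the odd cycle through v
  set q' : G.Walk a v := p.concat hvb.symm with hq'def
  have hq'path : q'.IsPath := by
    apply Walk.IsPath.mk'
    rw [hq'def, Walk.support_concat, List.nodup_append]
    exact ⟨hpp.support_nodup, List.nodup_singleton v, by
      intro z hz b h2 hzb
      rw [List.mem_singleton] at h2
      subst h2
      subst hzb
      exact hvp hz⟩
  have hvanq' : s(v, a) ∉ q'.edges := by
    rw [hq'def, Walk.edges_concat, List.concat_eq_append, List.mem_append]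
    rintro (h | h)
    · exact hvanp h
    · rw [List.mem_singleton, Sym2.eq_iff] at h
      rcases h with ⟨h1, h2⟩ | ⟨h1, h2⟩
      · exact hvb' h1
      · exact hab h2
  refine ⟨a, b, p, hpp, hpe, hva, hvb, hint, ?_, Walk.cons hva q', ?_, ?_, ?_⟩
  · rw [Walk.length_support, Nat.even_iff]
    have := Nat.odd_iff.mp hpodd
    omega
  · exact (Walk.cons_isCycle_iff q' hva).mpr ⟨hq'path, hvanq'⟩
  · rw [Walk.length_cons, hq'def, Walk.length_concat, Nat.odd_iff]
    have := Nat.odd_iff.mp hpodd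
    omega
  · intro z
    simp only [Walk.support_cons, hq'def, Walk.support_concat, List.concat_eq_append,
      List.mem_cons, List.mem_append, List.mem_singleton]
    tauto
end

section
/- Let G be a simple graph, v a vertex of G, and r a positive integer. If the subgraph of G induced by the ball N^{≤r}(v) of all vertices at distance at most r from v contains an odd cycle, then the subgraph of G induced by N^{≤r}(v) contains an odd cycle of length at most 2r+1. -/
open SimpleGraph Walk

private lemma parity_along_walk {V : Type*} {G : SimpleGraph V} (f : V → ZMod 2) :
    ∀ {a b : V} (w : G.Walk a b),
      (∀ d ∈ w.darts, f d.toProd.2 = f d.toProd.1 + 1) → f b = f a + w.length := by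
  intro a b w
  induction w with
  | nil => simp
  | @cons a c b h p ih =>
      intro hd
      have h1 : f c = f a + 1 := hd ⟨(a, c), h⟩ (by simp [darts_cons])
      have h2 : f b = f c + p.length := ih (fun d hdm => hd d (by simp [darts_cons, hdm]))
      rw [h2, h1]
      push_cast [Walk.length_cons]
      ring

/-- Any closed walk of odd length contains an odd cycle on its support, of no greater length. -/
private lemma exists_odd_cycle_of_odd_closed_walk {V : Type*} {G : SimpleGraph V} :
    ∀ (n : ℕ) {u : V} (w : G.Walk u u), w.length ≤ n → Odd w.length →
      ∃ (u' : V) (c : G.Walk u' u'), c.IsCycle ∧ Odd c.length ∧ c.length ≤ w.length ∧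
        ∀ x ∈ c.support, x ∈ w.support := by
  classical
  intro n
  induction n with
  | zero =>
      intro u w hle hodd
      interval_cases h : w.length
      · simp at hodd
  | succ n ih =>
      intro u w hle hodd
      cases w with
      | nil => simp at hodd
      | @cons _ x _ h p =>
          by_cases hnd : p.support.Nodup
          · -- p is a path
            have hpath : p.IsPath := IsPath.mk' hnd
            by_cases he : s(u, x) ∈ p.edges
            · -- then p must have length 1, contradiction with oddness
              exfalso
              have hre : s(u, x) ∈ p.reverse.edges := by
                rw [Walk.edges_reverse, List.mem_reverse]; exact he
              have hrp : p.reverse.IsPath := hpath.reverse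
              cases hpr : p.reverse with
              | nil => rw [hpr] at hre; simp at hre
              | @cons _ z _ h' pr' =>
                  rw [hpr] at hre hrp
                  have hnd' : (Walk.cons h' pr').support.Nodup := hrp.support_nodup
                  rw [Walk.support_cons] at hnd'
                  have hu_not : u ∉ pr'.support := (List.nodup_cons.mp hnd').1
                  have hz : x = z := by
                    rw [Walk.edges_cons, List.mem_cons] at hre
                    rcases hre with hre | hre
                    · exact (Sym2.congr_right.mp hre)
                    · exact absurd (pr'.fst_mem_support_of_mem_edges hre) hu_not
                  subst hz
                  -- pr' : Walk x x with nodup support, so it is nil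
                  have hpr'path : pr'.IsPath := IsPath.mk' (List.nodup_cons.mp hnd').2
                  have : pr' = Walk.nil := Walk.isPath_iff_eq_nil.mp hpr'path
                  subst this
                  have hlen : p.length = 1 := by
                    have := congrArg Walk.length hpr
                    simpa using this
                  rw [Walk.length_cons, hlen] at hodd
                  simp [Nat.odd_iff] at hodd
            · exact ⟨u, Walk.cons h p, (Walk.cons_isCycle_iff p h).mpr ⟨hpath, he⟩,
                hodd, le_rfl, fun _ hx => hx⟩
          · -- there is a repeated vertex in p.support
            obtain ⟨y, hdup⟩ := List.exists_duplicate_iff_not_nodup.mpr hnd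
            have hy : y ∈ p.support := hdup.mem
            have hcount : 2 ≤ p.support.count y := List.duplicate_iff_two_le_count.mp hdup
            have hsplit := (p.take_spec hy).symm
            have hyq2 : y ∈ (p.dropUntil y hy).support.tail := by
              by_contra hcon
              have hc1 : (p.takeUntil y hy).support.count y = 1 :=
                p.count_support_takeUntil_eq_one hy
              have : p.support.count y =
                  (p.takeUntil y hy).support.count y
                    + (p.dropUntil y hy).support.tail.count y := by
                conv_lhs => rw [hsplit]
                rw [Walk.support_append, List.count_append]
              rw [hc1, List.count_eq_zero_of_not_mem hcon] at this
              omega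
            cases hq2 : p.dropUntil y hy with
            | nil => rw [hq2] at hyq2; simp at hyq2
            | @cons _ z _ h2 q2' =>
                rw [hq2, Walk.support_cons] at hyq2
                simp only [List.tail_cons] at hyq2
                -- the two closed walks
                set c0 : G.Walk y y := Walk.cons h2 (q2'.takeUntil y hyq2) with hc0
                set outer : G.Walk u u :=
                  Walk.cons h ((p.takeUntil y hy).append (q2'.dropUntil y hyq2)) with houter
                have hq2len : (p.dropUntil y hy).length = q2'.length + 1 := by
                  rw [hq2, Walk.length_cons]
                have hq2'split := (q2'.take_spec hyq2).symm
                have hq2'len : q2'.length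
                    = (q2'.takeUntil y hyq2).length + (q2'.dropUntil y hyq2).length := by
                  conv_lhs => rw [hq2'split]
                  rw [Walk.length_append]
                have hplen : p.length = (p.takeUntil y hy).length + (p.dropUntil y hy).length := by
                  conv_lhs => rw [hsplit]
                  rw [Walk.length_append]
                have hwlen : (Walk.cons h p).length = c0.length + outer.length := by
                  rw [hc0, houter]
                  simp only [Walk.length_cons, Walk.length_append]
                  omega
                have hc0pos : 1 ≤ c0.length := by rw [hc0, Walk.length_cons]; omega
                have houterpos : 1 ≤ outer.length := by rw [houter, Walk.length_cons]; omega
                have hwle : (Walk.cons h p).length ≤ n + 1 := hle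
                -- supports
                have hsub0 : ∀ x' ∈ c0.support, x' ∈ (Walk.cons h p).support := by
                  intro x' hx'
                  rw [hc0, Walk.support_cons] at hx'
                  rw [Walk.support_cons]
                  rcases List.mem_cons.mp hx' with hx' | hx'
                  · subst hx'; exact List.mem_cons_of_mem _ hy
                  · have : x' ∈ q2'.support := q2'.support_takeUntil_subset hyq2 hx'
                    have : x' ∈ (p.dropUntil y hy).support := by
                      rw [hq2, Walk.support_cons]; exact List.mem_cons_of_mem _ this
                    exact List.mem_cons_of_mem _ (p.support_dropUntil_subset hy this)
                have hsubo : ∀ x' ∈ outer.support, x' ∈ (Walk.cons h p).support := by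
                  intro x' hx'
                  rw [houter, Walk.support_cons] at hx'
                  rw [Walk.support_cons]
                  rcases List.mem_cons.mp hx' with hx' | hx'
                  · subst hx'; exact List.mem_cons_self
                  · rw [Walk.mem_support_append_iff] at hx'
                    rcases hx' with hx' | hx'
                    · exact List.mem_cons_of_mem _ (p.support_takeUntil_subset hy hx')
                    · have : x' ∈ q2'.support := q2'.support_dropUntil_subset hyq2 hx'
                      have : x' ∈ (p.dropUntil y hy).support := by
                        rw [hq2, Walk.support_cons]; exact List.mem_cons_of_mem _ this
                      exact List.mem_cons_of_mem _ (p.support_dropUntil_subset hy this)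
                rcases Nat.even_or_odd c0.length with hev | hodd0
                · -- outer is odd
                  have hoddo : Odd outer.length := by
                    obtain ⟨a, ha⟩ := hev
                    obtain ⟨b, hb⟩ := hodd
                    rw [hwlen] at hb
                    rw [Nat.odd_iff]
                    omega
                  obtain ⟨u', c, hcyc, hco, hcl, hcs⟩ :=
                    ih outer (by omega) hoddo
                  exact ⟨u', c, hcyc, hco, by omega, fun x' hx' => hsubo x' (hcs x' hx')⟩
                · obtain ⟨u', c, hcyc, hco, hcl, hcs⟩ :=
                    ih c0 (by omega) hodd0
                  exact ⟨u', c, hcyc, hco, by omega, fun x' hx' => hsub0 x' (hcs x' hx')⟩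

/-- If the ball of radius `r` around `v` (encoded: every vertex of
the cycle is joined to `v` by a walk of length at most `r`) contains an odd cycle,
then it contains an odd cycle of length at most `2r+1`. -/
theorem odd_cycle_in_ball
    {V : Type*} (G : SimpleGraph V) (v : V) (r : ℕ) (hr : 1 ≤ r)
    (u : V) (c : G.Walk u u) (hc : c.IsCycle) (hodd : Odd c.length)
    (hball : ∀ x ∈ c.support, ∃ p : G.Walk v x, p.length ≤ r) :
    ∃ (u' : V) (c' : G.Walk u' u'), c'.IsCycle ∧ Odd c'.length ∧
      c'.length ≤ 2 * r + 1 ∧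
      ∀ x ∈ c'.support, ∃ p : G.Walk v x, p.length ≤ r := by
  classical
  set g : V → ℕ := fun x =>
    if h : ∃ p : G.Walk v x, p.length ≤ r then h.choose.length else 0 with hg
  set f : V → ZMod 2 := fun x => (g x : ZMod 2) with hf
  -- find a dart of c whose endpoints have equal parity
  have hdart : ∃ d ∈ c.darts, f d.toProd.2 = f d.toProd.1 := by
    by_contra hcon
    push_neg at hcon
    have hstep : ∀ d ∈ c.darts, f d.toProd.2 = f d.toProd.1 + 1 := by
      intro d hd
      have hne := hcon d hd
      have : ∀ a b : ZMod 2, a ≠ b → a = b + 1 := by decide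
      exact this _ _ hne
    have hpw := parity_along_walk f c hstep
    have hlen0 : (c.length : ZMod 2) = 0 := (left_eq_add.mp hpw).symm ▸ rfl
    obtain ⟨k, hk⟩ := hodd
    rw [hk] at hlen0
    push_cast at hlen0
    have h2 : (2 : ZMod 2) = 0 := by decide
    rw [h2] at hlen0
    simp at hlen0
  obtain ⟨d, hd, hpar⟩ := hdart
  have hfst : d.toProd.1 ∈ c.support := c.dart_fst_mem_support_of_mem_darts hd
  have hsnd : d.toProd.2 ∈ c.support := c.dart_snd_mem_support_of_mem_darts hd
  obtain hx1 := hball _ hfst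
  obtain hx2 := hball _ hsnd
  set P : G.Walk v d.toProd.1 := hx1.choose with hP
  set Q : G.Walk v d.toProd.2 := hx2.choose with hQ
  have hPr : P.length ≤ r := hx1.choose_spec
  have hQr : Q.length ≤ r := hx2.choose_spec
  have hgP : g d.toProd.1 = P.length := by rw [hg]; simp only; rw [dif_pos hx1]
  have hgQ : g d.toProd.2 = Q.length := by rw [hg]; simp only; rw [dif_pos hx2]
  have hparn : (Q.length : ZMod 2) = (P.length : ZMod 2) := by
    have := hpar
    rw [hf] at this
    simp only at this
    rw [hgP, hgQ] at this
    exact this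
  have hmod : Q.length % 2 = P.length % 2 := by
    have := (ZMod.natCast_eq_natCast_iff _ _ _).mp hparn
    exact this
  -- build the odd closed walk through v
  set W : G.Walk v v := P.append (Walk.cons d.adj Q.reverse) with hW
  have hWlen : W.length = P.length + Q.length + 1 := by
    rw [hW, Walk.length_append, Walk.length_cons, Walk.length_reverse]
    omega
  have hWodd : Odd W.length := by
    rw [hWlen, Nat.odd_iff]
    omega
  have hWle : W.length ≤ 2 * r + 1 := by rw [hWlen]; omega
  obtain ⟨u', c', hcyc, hco, hcl, hcs⟩ :=
    exists_odd_cycle_of_odd_closed_walk W.length W le_rfl hWodd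
  refine ⟨u', c', hcyc, hco, le_trans hcl hWle, ?_⟩
  intro x hx
  have hxW : x ∈ W.support := hcs x hx
  rw [hW, Walk.mem_support_append_iff] at hxW
  rcases hxW with hxP | hxC
  · exact ⟨P.takeUntil x hxP, le_trans (P.length_takeUntil_le hxP) hPr⟩
  · rw [Walk.support_cons] at hxC
    rcases List.mem_cons.mp hxC with hxC | hxC
    · subst hxC
      exact ⟨P, hPr⟩
    · rw [Walk.support_reverse, List.mem_reverse] at hxC
      exact ⟨Q.takeUntil x hxC, le_trans (Q.length_takeUntil_le hxC) hQr⟩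
end
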